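/- Let T > 0 and let S : [0,T] × [0,1) → ℝ have continuous partial derivatives ∂_t S and ∂_z S and satisfy the PDE ∂_t S(t,z) = z · ∂_z S(t,z) · (S(t,z) − 1) on [0,T] × (0,1). Fix w ∈ (0,1) and define ψ_w(t) = w · e^{t(1 − S(0,w))}. Then for every t ∈ [0,T] such that ψ_w(s) < 1 for all s ∈ [0,t], one has S(t, ψ_w(t)) = S(0, w), and consequently ψ_w satisfies the characteristic equation (d/dt) ψ_w(t) = ψ_w(t) · (1 − S(t, ψ_w(t))). -/

import Mathlib

open Set Filter Real Topology

theorem stmt7 (T : ℝ) (hT : 0 < T) (S St Sz : ℝ → ℝ → ℝ)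
    (hSt : ∀ t ∈ Set.Icc (0 : ℝ) T, ∀ z ∈ Set.Ico (0 : ℝ) 1,
      HasDerivWithinAt (fun s => S s z) (St t z) (Set.Icc 0 T) t)
    (hSz : ∀ t ∈ Set.Icc (0 : ℝ) T, ∀ z ∈ Set.Ico (0 : ℝ) 1,
      HasDerivWithinAt (fun w => S t w) (Sz t z) (Set.Ico 0 1) z)
    (hStc : ContinuousOn (fun p : ℝ × ℝ => St p.1 p.2) (Set.Icc 0 T ×ˢ Set.Ico 0 1))
    (hSzc : ContinuousOn (fun p : ℝ × ℝ => Sz p.1 p.2) (Set.Icc 0 T ×ˢ Set.Ico 0 1))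
    (hPDE : ∀ t ∈ Set.Icc (0 : ℝ) T, ∀ z ∈ Set.Ioo (0 : ℝ) 1,
      St t z = z * Sz t z * (S t z - 1))
    (w : ℝ) (hw : w ∈ Set.Ioo (0 : ℝ) 1)
    (ψ : ℝ → ℝ) (hψ : ∀ t : ℝ, ψ t = w * Real.exp (t * (1 - S 0 w))) :
    ∀ t ∈ Set.Icc (0 : ℝ) T, (∀ s ∈ Set.Icc (0 : ℝ) t, ψ s < 1) →
      S t (ψ t) = S 0 w ∧
      HasDerivWithinAt ψ (ψ t * (1 - S t (ψ t))) (Set.Icc 0 T) t := by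
  intro t ht hlt
  set c : ℝ := 1 - S 0 w with hc
  -- derivative of ψ
  have hψ' : ∀ s : ℝ, HasDerivAt ψ (c * ψ s) s := by
    intro s
    have h1 : HasDerivAt (fun u : ℝ => u * c) c s := by
      simpa using (hasDerivAt_id s).mul_const c
    have h2 : HasDerivAt (fun u : ℝ => w * Real.exp (u * c)) (w * (Real.exp (s * c) * c)) s :=
      h1.exp.const_mul w
    have h3 : HasDerivAt (fun u : ℝ => w * Real.exp (u * c)) (c * (w * Real.exp (s * c))) s := by
      convert h2 using 1; ring
    have hfun : ψ = fun u : ℝ => w * Real.exp (u * c) := funext fun u => hψ u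
    rw [hψ s, hfun]
    exact h3
  have hψpos : ∀ s : ℝ, 0 < ψ s := by
    intro s; rw [hψ s]; exact mul_pos hw.1 (Real.exp_pos _)
  have hψmem : ∀ s ∈ Icc (0:ℝ) t, ψ s ∈ Ioo (0:ℝ) 1 := fun s hs => ⟨hψpos s, hlt s hs⟩
  have htT : Icc (0:ℝ) t ⊆ Icc 0 T := Icc_subset_Icc le_rfl ht.2
  have hψcont : Continuous ψ := by
    have hfun : ψ = fun u : ℝ => w * Real.exp (u * c) := funext fun u => hψ u
    rw [hfun]; continuity
  -- MVT selection: for each x, s, a mean point ξ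
  have hsel : ∀ x ∈ Icc (0:ℝ) t, ∀ s ∈ Icc (0:ℝ) t, ∃ ξ : ℝ, ξ ∈ Ioo (0:ℝ) 1 ∧
      S s (ψ s) - S s (ψ x) = Sz s ξ * (ψ s - ψ x) ∧ |ξ - ψ x| ≤ |ψ s - ψ x| := by
    intro x hx s hs
    have hsT : s ∈ Icc (0:ℝ) T := htT hs
    have hψx := hψmem x hx
    have hψs := hψmem s hs
    have hderiv : ∀ z ∈ Ioo (0:ℝ) 1, HasDerivAt (fun z => S s z) (Sz s z) z := by
      intro z hz
      exact (hSz s hsT z (Ioo_subset_Ico_self hz)).hasDerivAt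
        (Ico_mem_nhds hz.1 hz.2)
    have hcont : ∀ a b : ℝ, a ∈ Ioo (0:ℝ) 1 → b ∈ Ioo (0:ℝ) 1 →
        ContinuousOn (fun z => S s z) (Icc a b) := by
      intro a b ha hb z hz
      have hz' : z ∈ Ico (0:ℝ) 1 := ⟨le_trans ha.1.le hz.1, lt_of_le_of_lt hz.2 hb.2⟩
      exact ((hSz s hsT z hz').continuousWithinAt).mono
        (fun y hy => ⟨le_trans ha.1.le hy.1, lt_of_le_of_lt hy.2 hb.2⟩)
    rcases lt_trichotomy (ψ x) (ψ s) with h | h | h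
    · obtain ⟨ξ, hξ, hξeq⟩ := exists_hasDerivAt_eq_slope (fun z => S s z) (fun z => Sz s z) h
        (hcont _ _ hψx hψs) (fun z hz => hderiv z
          ⟨lt_trans hψx.1 hz.1, lt_trans hz.2 hψs.2⟩)
      refine ⟨ξ, ⟨lt_trans hψx.1 hξ.1, lt_trans hξ.2 hψs.2⟩, ?_, ?_⟩
      · have hne : ψ s - ψ x ≠ 0 := sub_ne_zero.mpr h.ne'
        rw [hξeq, div_mul_eq_mul_div, eq_div_iff hne]
        try ring
      · rw [abs_of_pos (by linarith [hξ.1]), abs_of_pos (by linarith)]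
        linarith [hξ.2]
    · exact ⟨ψ x, hψx, by rw [h]; ring, by simp [h]⟩
    · obtain ⟨ξ, hξ, hξeq⟩ := exists_hasDerivAt_eq_slope (fun z => S s z) (fun z => Sz s z) h
        (hcont _ _ hψs hψx) (fun z hz => hderiv z
          ⟨lt_trans hψs.1 hz.1, lt_trans hz.2 hψx.2⟩)
      refine ⟨ξ, ⟨lt_trans hψs.1 hξ.1, lt_trans hξ.2 hψx.2⟩, ?_, ?_⟩
      · have hne : ψ x - ψ s ≠ 0 := sub_ne_zero.mpr h.ne'
        rw [hξeq, div_mul_eq_mul_div, eq_div_iff hne]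
        try ring
      · rw [abs_of_neg (by linarith [hξ.2]), abs_of_neg (by linarith)]
        linarith [hξ.1]
  -- key: derivative of s ↦ S s (ψ s) within Icc 0 t
  have key : ∀ x ∈ Icc (0:ℝ) t, HasDerivWithinAt (fun s => S s (ψ s))
      (St x (ψ x) + Sz x (ψ x) * (c * ψ x)) (Icc 0 t) x := by
    intro x hx
    choose! ξ hξ1 hξ2 hξ3 using hsel x hx
    set L := 𝓝[Icc (0:ℝ) t \ {x}] x with hL
    have hself : ∀ᶠ s in L, s ∈ Icc (0:ℝ) t \ {x} := self_mem_nhdsWithin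
    have hψx := hψmem x hx
    -- slope of s ↦ S s (ψ x)
    have h1 : Tendsto (slope (fun s => S s (ψ x)) x) L (𝓝 (St x (ψ x))) :=
      hasDerivWithinAt_iff_tendsto_slope.mp
        (((hSt x (htT hx) (ψ x) (Ioo_subset_Ico_self hψx)).mono htT))
    -- slope of ψ
    have h2 : Tendsto (slope ψ x) L (𝓝 (c * ψ x)) :=
      hasDerivWithinAt_iff_tendsto_slope.mp ((hψ' x).hasDerivWithinAt)
    -- ξ s → ψ x
    have hψtend : Tendsto ψ L (𝓝 (ψ x)) :=
      (hψcont.tendsto x).mono_left nhdsWithin_le_nhds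
    have habs : Tendsto (fun s => |ψ s - ψ x|) L (𝓝 0) := by
      have h0 : Tendsto (fun s => ψ s - ψ x) L (𝓝 0) := by
        simpa using hψtend.sub_const (ψ x)
      simpa using h0.abs
    have hξtend : Tendsto (fun s => ξ s) L (𝓝 (ψ x)) := by
      have h0 : Tendsto (fun s => ξ s - ψ x) L (𝓝 0) := by
        rw [tendsto_zero_iff_abs_tendsto_zero]
        refine tendsto_of_tendsto_of_tendsto_of_le_of_le' tendsto_const_nhds habs
          (Eventually.of_forall fun s => abs_nonneg _) ?_
        exact hself.mono fun s hs => hξ3 s hs.1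
      have := h0.add_const (ψ x)
      simpa using this
    -- continuity of Sz along (s, ξ s)
    have h3 : Tendsto (fun s => Sz s (ξ s)) L (𝓝 (Sz x (ψ x))) := by
      have hmem : (x, ψ x) ∈ Icc (0:ℝ) T ×ˢ Ico (0:ℝ) 1 :=
        ⟨htT hx, Ioo_subset_Ico_self hψx⟩
      have hcw : Tendsto (fun p : ℝ × ℝ => Sz p.1 p.2)
          (𝓝[Icc (0:ℝ) T ×ˢ Ico (0:ℝ) 1] (x, ψ x)) (𝓝 (Sz x (ψ x))) := hSzc _ hmem
      have hpair : Tendsto (fun s => (s, ξ s)) L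
          (𝓝[Icc (0:ℝ) T ×ˢ Ico (0:ℝ) 1] (x, ψ x)) := by
        rw [tendsto_nhdsWithin_iff]
        constructor
        · exact (tendsto_id.mono_left nhdsWithin_le_nhds).prodMk_nhds hξtend
        · exact hself.mono fun s hs => ⟨htT hs.1, Ioo_subset_Ico_self (hξ1 s hs.1)⟩
      simpa [Function.comp_def] using hcw.comp hpair
    -- combine
    have hcomb : Tendsto (fun s => Sz s (ξ s) * slope ψ x s +
        slope (fun u => S u (ψ x)) x s) L
        (𝓝 (Sz x (ψ x) * (c * ψ x) + St x (ψ x))) := (h3.mul h2).add h1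
    rw [hasDerivWithinAt_iff_tendsto_slope]
    rw [show St x (ψ x) + Sz x (ψ x) * (c * ψ x)
        = Sz x (ψ x) * (c * ψ x) + St x (ψ x) by ring]
    refine hcomb.congr' ?_
    refine hself.mono fun s hs => ?_
    have hsx : s - x ≠ 0 := sub_ne_zero.mpr (fun h => hs.2 (by simp [h]))
    have heq := hξ2 s hs.1
    have halg : Sz s (ξ s) * ((ψ s - ψ x) / (s - x)) + (S s (ψ x) - S x (ψ x)) / (s - x)
        = (S s (ψ s) - S x (ψ x)) / (s - x) := by
      field_simp
      linarith [heq]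
    simpa [slope_def_field] using halg
  -- g and its derivative
  set g : ℝ → ℝ := fun s => S s (ψ s) - S 0 w with hgdef
  have hgd : ∀ x ∈ Icc (0:ℝ) t, HasDerivWithinAt g
      (St x (ψ x) + Sz x (ψ x) * (c * ψ x)) (Icc 0 t) x :=
    fun x hx => (key x hx).sub_const _
  have hD : ∀ x ∈ Icc (0:ℝ) t, St x (ψ x) + Sz x (ψ x) * (c * ψ x)
      = (ψ x * Sz x (ψ x)) * g x := by
    intro x hx
    rw [hPDE x (htT hx) (ψ x) (hψmem x hx)]
    simp only [hgdef, hc]; ring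
  -- bound on the coefficient
  have hcontSz : ContinuousOn (fun s => ψ s * Sz s (ψ s)) (Icc (0:ℝ) t) := by
    apply (hψcont.continuousOn).mul
    exact hSzc.comp (f := fun s => (s, ψ s)) (continuousOn_id.prodMk hψcont.continuousOn)
      (fun s hs => ⟨htT hs, Ioo_subset_Ico_self (hψmem s hs)⟩)
  obtain ⟨K, hK⟩ := isCompact_Icc.exists_bound_of_continuousOn hcontSz
  -- Gronwall
  have hψ0 : ψ 0 = w := by rw [hψ 0]; simp
  have hgt : ‖g t‖ ≤ 0 := by
    have hgron := norm_le_gronwallBound_of_norm_deriv_right_le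
      (f := g) (f' := fun x => St x (ψ x) + Sz x (ψ x) * (c * ψ x))
      (δ := 0) (K := max K 0) (ε := 0) (a := 0) (b := t)
      (fun x hx => (hgd x hx).continuousWithinAt)
      (fun x hx => (hgd x (Ico_subset_Icc_self hx)).mono_of_mem_nhdsWithin
        (mem_nhdsWithin.mpr ⟨Iio t, isOpen_Iio, hx.2,
          fun y hy => ⟨le_trans hx.1 hy.2, hy.1.le⟩⟩))
      (by simp [hgdef, hψ0])
      (fun x hx => by
        show ‖St x (ψ x) + Sz x (ψ x) * (c * ψ x)‖ ≤ max K 0 * ‖g x‖ + 0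
        rw [hD x (Ico_subset_Icc_self hx), norm_mul, add_zero]
        exact mul_le_mul_of_nonneg_right
          (le_trans (hK x (Ico_subset_Icc_self hx)) (le_max_left _ _))
          (norm_nonneg _))
      t (right_mem_Icc.mpr ht.1)
    simpa [gronwallBound_ε0_δ0] using hgron
  have hgt0 : g t = 0 := norm_le_zero_iff.mp hgt
  have heqS : S t (ψ t) = S 0 w := by
    have := hgt0
    simpa [hgdef, sub_eq_zero] using this
  refine ⟨heqS, ?_⟩
  have hd := (hψ' t).hasDerivWithinAt (s := Icc (0:ℝ) T)
  rw [heqS]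
  rw [show ψ t * (1 - S 0 w) = c * ψ t by rw [hc]; ring]
  exact hd
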